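/- arXiv:1807.09325 — 5 statements merged into one kernel-verified Lean document; each statement's English description precedes it below -/
import Mathlib

section
/- Let T be a nonnegative random variable with finite second moment and let ξ be an independent exponential random variable with rate λ > 0. Then the average age of information under the drop-new-packet (DNP) scheme, defined as a_DNP = E[T] + (1/2)·E[(T+ξ)²]/E[T+ξ], equals E[T] + 1/λ + (E[T²]/(2E[T]))·(ρ/(1+ρ)), where ρ = λ E[T]. -/
open MeasureTheory ProbabilityTheory Real Set
open scoped ENNReal NNReal

lemma exp_pdf_indicator {l : ℝ} (hl : 0 < l) (n : ℕ) :
    (fun x : ℝ => exponentialPDFReal l x * x ^ n)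
      = Set.indicator (Ici 0) (fun x => l * Real.exp (-(l * x)) * x ^ n) := by
  funext x
  simp only [exponentialPDFReal, gammaPDFReal, Set.indicator, mem_Ici]
  split_ifs with h
  · simp [Real.Gamma_one]
  · simp

lemma exp_pdf_mul_integrableOn {l : ℝ} (hl : 0 < l) (n : ℕ) :
    IntegrableOn (fun x : ℝ => l * Real.exp (-(l * x)) * x ^ n) (Ioi 0) := by
  have h0 : IntegrableOn (fun x : ℝ => x ^ (n : ℝ) * Real.exp (-l * x ^ (1 : ℝ))) (Ioi 0) :=
    integrableOn_rpow_mul_exp_neg_mul_rpow (lt_of_lt_of_le neg_one_lt_zero (Nat.cast_nonneg n)) zero_lt_one hl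
  have h1 : IntegrableOn (fun x : ℝ => l * (x ^ (n : ℝ) * Real.exp (-l * x ^ (1 : ℝ)))) (Ioi 0) :=
    h0.const_mul l
  refine h1.congr_fun (fun x hx => ?_) measurableSet_Ioi
  beta_reduce
  rw [Real.rpow_natCast, Real.rpow_one]
  ring_nf

lemma exp_pdf_mul_integrable {l : ℝ} (hl : 0 < l) (n : ℕ) :
    Integrable (fun x : ℝ => exponentialPDFReal l x * x ^ n) := by
  rw [exp_pdf_indicator hl n, integrable_indicator_iff measurableSet_Ici]
  rw [IntegrableOn, ← Measure.restrict_congr_set Ioi_ae_eq_Ici]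
  exact exp_pdf_mul_integrableOn hl n

lemma exp_pdf_mul_integral {l : ℝ} (hl : 0 < l) (n : ℕ) :
    ∫ x : ℝ, exponentialPDFReal l x * x ^ n = (Nat.factorial n : ℝ) / l ^ n := by
  rw [exp_pdf_indicator hl n, integral_indicator measurableSet_Ici,
    integral_Ici_eq_integral_Ioi]
  have h0 : ∫ x in Ioi (0:ℝ), l * Real.exp (-(l * x)) * x ^ n
      = l * ∫ x in Ioi (0:ℝ), x ^ (((n : ℝ) + 1) - 1) * Real.exp (-(l * x)) := by
    rw [← integral_const_mul]
    refine setIntegral_congr_fun measurableSet_Ioi (fun x hx => ?_)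
    have : ((n : ℝ) + 1) - 1 = (n : ℝ) := by ring
    rw [this, Real.rpow_natCast]
    ring
  rw [h0, integral_rpow_mul_exp_neg_mul_Ioi (by positivity) hl]
  have h1 : ((1 : ℝ) / l) ^ ((n : ℝ) + 1) = (1 / l) ^ (n + 1) := by
    rw [← Real.rpow_natCast (1/l) (n+1)]
    push_cast
    ring_nf
  have h2 : Real.Gamma ((n : ℝ) + 1) = Nat.factorial n := Real.Gamma_nat_eq_factorial n
  rw [h1, h2]
  field_simp
  ring_nf
  rw [show l * l ^ n * l⁻¹ * l⁻¹ ^ n = (l * l⁻¹) * (l * l⁻¹) ^ n by ring, mul_inv_cancel₀ hl.ne']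
  simp

lemma exp_moment_integrable {l : ℝ} (hl : 0 < l) (n : ℕ) :
    Integrable (fun x : ℝ => x ^ n) (expMeasure l) := by
  have hmeas : Measurable fun x : ℝ => (exponentialPDFReal l x).toNNReal :=
    (measurable_gammaPDFReal 1 l).real_toNNReal
  have hμ : expMeasure l
      = volume.withDensity (fun x => ((exponentialPDFReal l x).toNNReal : ℝ≥0∞)) := rfl
  rw [hμ, integrable_withDensity_iff_integrable_smul hmeas]
  refine (exp_pdf_mul_integrable hl n).congr ?_
  refine Filter.Eventually.of_forall (fun x => ?_)
  have hnn : 0 ≤ exponentialPDFReal l x := gammaPDFReal_nonneg zero_lt_one hl x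
  simp [NNReal.smul_def, Real.coe_toNNReal _ hnn]

lemma exp_moment {l : ℝ} (hl : 0 < l) (n : ℕ) :
    ∫ x, x ^ n ∂(expMeasure l) = (Nat.factorial n : ℝ) / l ^ n := by
  have hmeas : Measurable fun x : ℝ => (exponentialPDFReal l x).toNNReal :=
    (measurable_gammaPDFReal 1 l).real_toNNReal
  have hμ : expMeasure l
      = volume.withDensity (fun x => ((exponentialPDFReal l x).toNNReal : ℝ≥0∞)) := rfl
  rw [hμ, integral_withDensity_eq_integral_smul hmeas]
  rw [← exp_pdf_mul_integral hl n]
  refine integral_congr_ae (Filter.Eventually.of_forall (fun x => ?_))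
  have hnn : 0 ≤ exponentialPDFReal l x := gammaPDFReal_nonneg zero_lt_one hl x
  simp [NNReal.smul_def, Real.coe_toNNReal _ hnn]

/-- AAoI of the DNP scheme:
`E[T] + (1/2)·E[(T+ξ)²]/E[T+ξ] = E[T] + 1/λ + (E[T²]/(2E[T]))·(ρ/(1+ρ))`, `ρ = λE[T]`. -/
theorem aaoi_dnp
    {Ω : Type} [MeasureSpace Ω] [IsProbabilityMeasure (ℙ : Measure Ω)]
    {l : ℝ} (hl : 0 < l)
    (T ξ : Ω → ℝ) (hT0 : ∀ ω, 0 ≤ T ω)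
    (hTm : Measurable T) (hξm : Measurable ξ)
    (hT2 : Integrable (fun ω => (T ω) ^ 2) ℙ)
    (hξexp : Measure.map ξ ℙ = expMeasure l)
    (hindep : IndepFun T ξ ℙ)
    (hETpos : 0 < ∫ ω, T ω ∂ℙ) :
    (∫ ω, T ω ∂ℙ) + (1 / 2) * (∫ ω, (T ω + ξ ω) ^ 2 ∂ℙ) / (∫ ω, (T ω + ξ ω) ∂ℙ)
      = (∫ ω, T ω ∂ℙ) + 1 / l
        + ((∫ ω, (T ω) ^ 2 ∂ℙ) / (2 * ∫ ω, T ω ∂ℙ))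
          * ((l * ∫ ω, T ω ∂ℙ) / (1 + l * ∫ ω, T ω ∂ℙ)) := by
  -- moments of ξ
  have hξn : ∀ n : ℕ, Integrable (fun ω => ξ ω ^ n) ℙ := by
    intro n
    have := exp_moment_integrable hl n
    rw [← hξexp] at this
    exact (integrable_map_measure (measurable_id.pow_const n).aestronglyMeasurable
      hξm.aemeasurable).mp (by simpa using this)
  have hξIn : ∀ n : ℕ, ∫ ω, ξ ω ^ n ∂ℙ = (Nat.factorial n : ℝ) / l ^ n := by
    intro n
    have h1 : ∫ ω, ξ ω ^ n ∂ℙ = ∫ x, x ^ n ∂(Measure.map ξ ℙ) :=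
      (integral_map hξm.aemeasurable (f := fun x => x ^ n)
        (measurable_id.pow_const n).aestronglyMeasurable).symm
    rw [h1, hξexp, exp_moment hl n]
  have hξ1 : Integrable ξ ℙ := by simpa using hξn 1
  have hEξ : ∫ ω, ξ ω ∂ℙ = 1 / l := by simpa [Nat.factorial] using hξIn 1
  have hEξ2 : ∫ ω, ξ ω ^ 2 ∂ℙ = 2 / l ^ 2 := by simpa [Nat.factorial] using hξIn 2
  -- integrability of T
  have hT1 : Integrable T ℙ := by
    refine (hT2.add (integrable_const 1)).mono' hTm.aestronglyMeasurable
      (Filter.Eventually.of_forall fun ω => ?_)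
    have h0 := hT0 ω
    simp only [Pi.add_apply]
    rw [Real.norm_eq_abs, abs_of_nonneg h0]
    nlinarith
  -- product
  have hTξ : Integrable (fun ω => T ω * ξ ω) ℙ := hindep.integrable_mul hT1 hξ1
  have hETξ : ∫ ω, T ω * ξ ω ∂ℙ = (∫ ω, T ω ∂ℙ) * ∫ ω, ξ ω ∂ℙ :=
    hindep.integral_fun_mul_eq_mul_integral hTm.aestronglyMeasurable hξm.aestronglyMeasurable
  -- expand the square
  have hsq : ∫ ω, (T ω + ξ ω) ^ 2 ∂ℙ
      = (∫ ω, T ω ^ 2 ∂ℙ) + (2 * ((∫ ω, T ω ∂ℙ) * ∫ ω, ξ ω ∂ℙ) + 2 / l ^ 2) := by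
    have he : (fun ω => (T ω + ξ ω) ^ 2)
        = fun ω => T ω ^ 2 + (2 * (T ω * ξ ω) + ξ ω ^ 2) := by
      funext ω; ring
    have h2 : Integrable (fun ω => 2 * (T ω * ξ ω)) ℙ := hTξ.const_mul 2
    have h3 : Integrable (fun ω => ξ ω ^ 2) ℙ := hξn 2
    have h23 : Integrable (fun ω => 2 * (T ω * ξ ω) + ξ ω ^ 2) ℙ := h2.add h3
    rw [he, integral_add hT2 h23, integral_add h2 h3,
      integral_const_mul, hETξ, hEξ2]
  have hsum : ∫ ω, (T ω + ξ ω) ∂ℙ = (∫ ω, T ω ∂ℙ) + 1 / l := by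
    rw [integral_add hT1 hξ1, hEξ]
  rw [hsq, hsum, hEξ]
  set a := ∫ ω, T ω ∂ℙ
  set b := ∫ ω, T ω ^ 2 ∂ℙ
  have ha : a ≠ 0 := ne_of_gt hETpos
  have hl0 : l ≠ 0 := ne_of_gt hl
  have h1 : a + 1 / l ≠ 0 := by positivity
  have h2 : 1 + l * a ≠ 0 := by positivity
  field_simp
  ring
end

section
/- Let T be a nonnegative random variable and ξ an independent Exp(λ) random variable, with γ := P(T ≤ ξ) = E[e^{-λT}] > 0. Let Γ be the random time to complete one transfer under the drop-old-packet scheme, satisfying the distributional fixed point Γ = T·1{ξ' > T} + (ξ' + Γ')·1{ξ' ≤ T} where ξ' ~ Exp(λ) and Γ' is an independent copy of Γ, all independent of T. Then E[Γ] = (1 − γ)/(λγ). -/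
open MeasureTheory ProbabilityTheory Real Set
open scoped ENNReal NNReal

lemma dop_expMeasure_Iic {l : ℝ} (hl : 0 < l) {t : ℝ} (ht : 0 ≤ t) :
    expMeasure l (Iic t) = ENNReal.ofReal (1 - Real.exp (-(l * t))) := by
  haveI := isProbabilityMeasure_expMeasure hl
  rw [← ProbabilityTheory.ofReal_cdf (μ := expMeasure l) t]
  congr 1
  have h := cdf_expMeasure_eq hl t
  rw [h, if_pos ht]

lemma dop_expMeasure_Ioi {l : ℝ} (hl : 0 < l) {t : ℝ} (ht : 0 ≤ t) :
    expMeasure l (Ioi t) = ENNReal.ofReal (Real.exp (-(l * t))) := by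
  haveI := isProbabilityMeasure_expMeasure hl
  have h1 : Real.exp (-(l * t)) ≤ 1 := by
    rw [Real.exp_le_one_iff]; nlinarith
  rw [← compl_Iic, prob_compl_eq_one_sub measurableSet_Iic, dop_expMeasure_Iic hl ht]
  rw [show (1 : ℝ≥0∞) = ENNReal.ofReal 1 by simp, ← ENNReal.ofReal_sub _ (by linarith)]
  norm_num

lemma dop_expMeasure_ae_nonneg {l : ℝ} : ∀ᵐ x ∂(expMeasure l), 0 ≤ x := by
  rw [ae_iff]
  have h : {x : ℝ | ¬ 0 ≤ x} = Iio 0 := by ext x; simp [not_le]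
  rw [h]
  have h2 : expMeasure l (Iio 0) = ∫⁻ y in Iio 0, exponentialPDF l y := by
    rw [show expMeasure l = volume.withDensity (exponentialPDF l) from rfl,
      withDensity_apply _ measurableSet_Iio]
  rw [h2, lintegral_exponentialPDF_of_nonpos le_rfl]

lemma dop_innerG {l : ℝ} (hl : 0 < l) {t : ℝ} (ht : 0 ≤ t) :
    ∫ x, (if t < x then (0:ℝ) else 1) ∂(expMeasure l) = 1 - Real.exp (-(l * t)) := by
  have h1 : Real.exp (-(l*t)) ≤ 1 := by rw [Real.exp_le_one_iff]; nlinarith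
  have hfun : (fun x : ℝ => if t < x then (0:ℝ) else 1)
      = (Iic t).indicator (fun _ => (1:ℝ)) := by
    ext x; by_cases h : t < x
    · simp [Set.indicator, not_le.mpr h, h]
    · simp [Set.indicator, not_lt.mp h, h]
  rw [hfun, integral_indicator_const _ measurableSet_Iic, measureReal_def, dop_expMeasure_Iic hl ht,
    ENNReal.toReal_ofReal (by linarith), smul_eq_mul, mul_one]

lemma dop_integral_Iic_id {l : ℝ} (hl : 0 < l) {t : ℝ} (ht : 0 ≤ t) :
    ∫ x in Iic t, x ∂(expMeasure l)
      = 1/l - (t + 1/l) * Real.exp (-(l * t)) := by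
  have hrw : expMeasure l
      = volume.withDensity (fun x => ((exponentialPDFReal l x).toNNReal : ℝ≥0∞)) := rfl
  rw [hrw, restrict_withDensity measurableSet_Iic,
    integral_withDensity_eq_integral_smul (by measurability) _]
  have hfun : ∀ x : ℝ, (exponentialPDFReal l x).toNNReal • x
      = (Ici 0).indicator (fun x => l * Real.exp (-(l * x)) * x) x := by
    intro x
    rw [NNReal.smul_def, Real.coe_toNNReal _ (exponentialPDFReal_nonneg hl x)]
    by_cases h : 0 ≤ x
    · simp only [Set.indicator_of_mem (mem_Ici.mpr h)]
      rw [exponentialPDFReal, gammaPDFReal, if_pos h]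
      simp [Real.Gamma_one]
    · simp [Set.indicator_of_notMem (fun hb => h (mem_Ici.mp hb)),
        exponentialPDFReal, gammaPDFReal, if_neg h]
  simp_rw [hfun]
  rw [setIntegral_indicator measurableSet_Ici,
    show Iic t ∩ Ici 0 = Icc 0 t by rw [inter_comm, Ici_inter_Iic],
    integral_Icc_eq_integral_Ioc, ← intervalIntegral.integral_of_le ht]
  have hFTC : ∀ x ∈ Set.uIcc (0:ℝ) t,
      HasDerivAt (fun y => -(y + 1/l) * Real.exp (-(l * y)))
        (l * Real.exp (-(l * x)) * x) x := by
    intro x _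
    have h1 : HasDerivAt (fun y : ℝ => -(y + 1/l)) (-1) x :=
      (((hasDerivAt_id x).add_const (1/l)).neg)
    have h2 : HasDerivAt (fun y : ℝ => Real.exp (-(l * y)))
        (Real.exp (-(l * x)) * (-l)) x := by
      simpa using (((hasDerivAt_id x).const_mul l).neg).exp
    have : HasDerivAt (fun y => -(y + 1/l) * Real.exp (-(l * y)))
        (-1 * Real.exp (-(l * x)) + -(x + 1/l) * (Real.exp (-(l * x)) * -l)) x := h1.fun_mul h2
    convert this using 1
    field_simp
    ring
  have hcont : Continuous fun x : ℝ => l * Real.exp (-(l * x)) * x := by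
    continuity
  rw [intervalIntegral.integral_eq_sub_of_hasDerivAt hFTC
    (hcont.intervalIntegrable _ _)]
  simp [Real.exp_zero]
  ring

lemma dop_innerF {l : ℝ} (hl : 0 < l) {t : ℝ} (ht : 0 ≤ t) :
    ∫ x, (if t < x then t else x) ∂(expMeasure l) = (1 - Real.exp (-(l * t))) / l := by
  haveI := isProbabilityMeasure_expMeasure hl
  have hfun : (fun x : ℝ => if t < x then t else x)
      = fun x => (Ioi t).indicator (fun _ => t) x + (Iic t).indicator id x := by
    ext x; by_cases h : t < x
    · simp [Set.indicator, h, not_le.mpr h]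
    · simp [Set.indicator, h, not_lt.mp h]
  have hint1 : Integrable ((Ioi t).indicator (fun _ => t)) (expMeasure l) :=
    (integrable_const t).indicator measurableSet_Ioi
  have hint2 : Integrable ((Iic t).indicator id) (expMeasure l) := by
    refine Integrable.mono (integrable_const t) ?_ ?_
    · exact (measurable_id.indicator measurableSet_Iic).aestronglyMeasurable
    · filter_upwards [dop_expMeasure_ae_nonneg (l := l)] with x hx
      by_cases h : x ∈ Iic t
      · rw [Set.indicator_of_mem h]
        simp only [id, Real.norm_eq_abs, abs_of_nonneg hx, abs_of_nonneg ht]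
        exact h
      · rw [Set.indicator_of_notMem h]
        simp [abs_of_nonneg ht, ht]
  rw [hfun, integral_add hint1 hint2, integral_indicator_const _ measurableSet_Ioi,
    integral_indicator measurableSet_Iic, measureReal_def, dop_expMeasure_Ioi hl ht]
  simp only [id]
  rw [dop_integral_Iic_id hl ht, ENNReal.toReal_ofReal (Real.exp_nonneg _), smul_eq_mul]
  field_simp
  ring

/-- first moment of the DOP completion time `Γ` from the distributional
fixed point `Γ = T·1{ξ' > T} + (ξ' + Γ')·1{ξ' ≤ T}`: `E[Γ] = (1−γ)/(λγ)`. -/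
theorem dop_gamma_first_moment
    {Ω : Type} [MeasureSpace Ω] [IsProbabilityMeasure (ℙ : Measure Ω)]
    {l : ℝ} (hl : 0 < l)
    (T ξ' Γ Γ' : Ω → ℝ) (hT0 : ∀ ω, 0 ≤ T ω)
    (hTm : Measurable T) (hξm : Measurable ξ') (hΓm : Measurable Γ) (hΓ'm : Measurable Γ')
    (hξexp : Measure.map ξ' ℙ = expMeasure l)
    (hcopy : Measure.map Γ' ℙ = Measure.map Γ ℙ)
    (hindep : iIndepFun ![T, ξ', Γ'] ℙ)
    (hTint : Integrable T ℙ) (hΓint : Integrable Γ ℙ)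
    (hfix : ∀ ω, Γ ω = (if T ω < ξ' ω then T ω else ξ' ω + Γ' ω))
    (hγpos : 0 < ∫ ω, Real.exp (-(l * T ω)) ∂ℙ) :
    (∫ ω, Γ ω ∂ℙ)
      = (1 - ∫ ω, Real.exp (-(l * T ω)) ∂ℙ) / (l * ∫ ω, Real.exp (-(l * T ω)) ∂ℙ) := by
  haveI := isProbabilityMeasure_expMeasure hl
  haveI : IsProbabilityMeasure (Measure.map T ℙ) := Measure.isProbabilityMeasure_map hTm.aemeasurable
  set γ := ∫ ω, Real.exp (-(l * T ω)) ∂ℙ with hγdef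
  set F : ℝ × ℝ → ℝ := fun p => if p.1 < p.2 then p.1 else p.2 with hFdef
  set G : ℝ × ℝ → ℝ := fun p => if p.1 < p.2 then 0 else 1 with hGdef
  have hFm : Measurable F :=
    Measurable.ite (measurableSet_lt measurable_fst measurable_snd)
      measurable_fst measurable_snd
  have hGm : Measurable G :=
    Measurable.ite (measurableSet_lt measurable_fst measurable_snd)
      measurable_const measurable_const
  have hmeas : ∀ i, Measurable (![T, ξ', Γ'] i) := by
    intro i; fin_cases i <;> simpa
  have hTξ : IndepFun T ξ' ℙ := by
    have := hindep.indepFun (i := 0) (j := 1) (by decide)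
    simpa using this
  have hpm : Measurable (fun ω => (T ω, ξ' ω)) := hTm.prodMk hξm
  have hmap : Measure.map (fun ω => (T ω, ξ' ω)) ℙ
      = (Measure.map T ℙ).prod (expMeasure l) := by
    rw [← hξexp]
    exact (indepFun_iff_map_prod_eq_prod_map_map hTm.aemeasurable hξm.aemeasurable).mp hTξ
  have hpairΓ : IndepFun (fun ω => (T ω, ξ' ω)) Γ' ℙ := by
    have := hindep.indepFun_prodMk hmeas 0 1 2 (by decide) (by decide)
    simpa using this
  -- ξ' is a.e. nonneg
  have hξae : ∀ᵐ ω ∂(ℙ : Measure Ω), 0 ≤ ξ' ω := by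
    have h0 : ∀ᵐ x ∂(Measure.map ξ' ℙ), 0 ≤ x := by
      rw [hξexp]; exact dop_expMeasure_ae_nonneg
    exact (ae_map_iff hξm.aemeasurable measurableSet_Ici).mp h0
  -- T's law is a.e. nonneg
  have hμTae : ∀ᵐ t ∂(Measure.map T ℙ), 0 ≤ t :=
    (ae_map_iff hTm.aemeasurable measurableSet_Ici).mpr (ae_of_all _ hT0)
  -- transfer to the product measure
  have htrans : ∀ h : ℝ × ℝ → ℝ, Measurable h →
      Integrable (fun ω => h (T ω, ξ' ω)) ℙ →
      ∫ ω, h (T ω, ξ' ω) ∂ℙ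
        = ∫ t, ∫ x, h (t, x) ∂(expMeasure l) ∂(Measure.map T ℙ) := by
    intro h hm hint
    have hint' : Integrable h ((Measure.map T ℙ).prod (expMeasure l)) := by
      rw [← hmap]
      exact (integrable_map_measure hm.aestronglyMeasurable hpm.aemeasurable).mpr hint
    rw [← integral_map hpm.aemeasurable hm.aestronglyMeasurable, hmap,
      integral_prod _ hint']
  -- integrabilities
  have hFint : Integrable (fun ω => F (T ω, ξ' ω)) ℙ := by
    refine hTint.mono ((hFm.comp hpm).aestronglyMeasurable) ?_
    filter_upwards [hξae] with ω hω
    simp only [hFdef, Real.norm_eq_abs]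
    by_cases h : T ω < ξ' ω
    · rw [if_pos h]
    · rw [if_neg h]
      rw [abs_of_nonneg hω, abs_of_nonneg (hT0 ω)]
      exact not_lt.mp h
  have hΓ'int : Integrable Γ' ℙ := by
    have h1 : Integrable id (Measure.map Γ' ℙ) := by
      rw [hcopy]
      exact (integrable_map_measure aestronglyMeasurable_id hΓm.aemeasurable).mpr hΓint
    exact (integrable_map_measure aestronglyMeasurable_id hΓ'm.aemeasurable).mp h1
  have hGbd : ∀ ω, ‖G (T ω, ξ' ω)‖ ≤ 1 := by
    intro ω
    simp only [hGdef, Real.norm_eq_abs]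
    by_cases h : T ω < ξ' ω <;> simp [h]
  have hGint : Integrable (fun ω => G (T ω, ξ' ω)) ℙ := by
    refine (integrable_const (1:ℝ)).mono ((hGm.comp hpm).aestronglyMeasurable) ?_
    filter_upwards with ω
    simpa using hGbd ω
  have hΓGint : Integrable (fun ω => Γ' ω * G (T ω, ξ' ω)) ℙ := by
    refine hΓ'int.mono ((hΓ'm.mul (hGm.comp hpm)).aestronglyMeasurable) ?_
    filter_upwards with ω
    rw [Real.norm_eq_abs, abs_mul]
    calc |Γ' ω| * |G (T ω, ξ' ω)| ≤ |Γ' ω| * 1 :=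
          mul_le_mul_of_nonneg_left (by simpa using hGbd ω) (abs_nonneg _)
    _ = ‖Γ' ω‖ := by rw [mul_one, Real.norm_eq_abs]
  -- pointwise decomposition
  have hpoint : ∀ ω, Γ ω = F (T ω, ξ' ω) + Γ' ω * G (T ω, ξ' ω) := by
    intro ω
    rw [hfix ω]
    by_cases h : T ω < ξ' ω <;> simp [hFdef, hGdef, h]
  -- exp(-(l T)) integrability and transfer
  have hexpΩint : Integrable (fun ω => Real.exp (-(l * T ω))) ℙ := by
    refine (integrable_const (1:ℝ)).mono ?_ ?_
    · exact (((hTm.const_mul l).neg).exp).aestronglyMeasurable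
    · filter_upwards with ω
      rw [Real.norm_eq_abs, abs_of_nonneg (Real.exp_nonneg _), norm_one]
      rw [Real.exp_le_one_iff]
      have := hT0 ω; nlinarith
  have hexpμint : Integrable (fun t => Real.exp (-(l * t))) (Measure.map T ℙ) := by
    refine (integrable_map_measure ?_ hTm.aemeasurable).mpr hexpΩint
    exact (((measurable_id.const_mul l).neg).exp).aestronglyMeasurable
  have hexpμ : ∫ t, Real.exp (-(l * t)) ∂(Measure.map T ℙ) = γ :=
    integral_map hTm.aemeasurable
      ((((measurable_id.const_mul l).neg).exp).aestronglyMeasurable)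
  have honeminus : ∫ t, (1 - Real.exp (-(l * t))) ∂(Measure.map T ℙ) = 1 - γ := by
    rw [integral_sub (integrable_const 1) hexpμint, integral_const]
    simp [hexpμ]
  -- the two integrals
  have hGval : ∫ ω, G (T ω, ξ' ω) ∂ℙ = 1 - γ := by
    rw [htrans G hGm hGint, ← honeminus]
    refine integral_congr_ae ?_
    filter_upwards [hμTae] with t ht
    exact dop_innerG hl ht
  have hFval : ∫ ω, F (T ω, ξ' ω) ∂ℙ = (1 - γ) / l := by
    rw [htrans F hFm hFint]
    have : ∫ t, ∫ x, F (t, x) ∂(expMeasure l) ∂(Measure.map T ℙ)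
        = ∫ t, (1 - Real.exp (-(l * t))) / l ∂(Measure.map T ℙ) := by
      refine integral_congr_ae ?_
      filter_upwards [hμTae] with t ht
      exact dop_innerF hl ht
    rw [this, integral_div, honeminus]
  -- independence factorization
  have hindΓG : IndepFun Γ' (fun ω => G (T ω, ξ' ω)) ℙ :=
    (hpairΓ.comp hGm measurable_id).symm
  have hprod : ∫ ω, Γ' ω * G (T ω, ξ' ω) ∂ℙ
      = (∫ ω, Γ' ω ∂ℙ) * (∫ ω, G (T ω, ξ' ω) ∂ℙ) :=
    hindΓG.integral_mul_eq_mul_integral hΓ'int.1 hGint.1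
  have hΓ'eq : ∫ ω, Γ' ω ∂ℙ = ∫ ω, Γ ω ∂ℙ := by
    calc ∫ ω, Γ' ω ∂ℙ = ∫ y, id y ∂(Measure.map Γ' ℙ) :=
          (integral_map hΓ'm.aemeasurable aestronglyMeasurable_id).symm
    _ = ∫ y, id y ∂(Measure.map Γ ℙ) := by rw [hcopy]
    _ = ∫ ω, Γ ω ∂ℙ := integral_map hΓm.aemeasurable aestronglyMeasurable_id
  -- assemble
  have key : ∫ ω, Γ ω ∂ℙ = (1 - γ) / l + (∫ ω, Γ ω ∂ℙ) * (1 - γ) := by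
    calc ∫ ω, Γ ω ∂ℙ = ∫ ω, (F (T ω, ξ' ω) + Γ' ω * G (T ω, ξ' ω)) ∂ℙ :=
          integral_congr_ae (ae_of_all _ hpoint)
    _ = (∫ ω, F (T ω, ξ' ω) ∂ℙ) + ∫ ω, Γ' ω * G (T ω, ξ' ω) ∂ℙ :=
          integral_add hFint hΓGint
    _ = (1 - γ) / l + (∫ ω, Γ ω ∂ℙ) * (1 - γ) := by
          rw [hFval, hprod, hΓ'eq, hGval]
  have hlne : l ≠ 0 := hl.ne'
  have hγne : γ ≠ 0 := hγpos.ne'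
  rw [eq_div_iff (by positivity)]
  field_simp at key
  nlinarith [key]
end

section
/- With the setup of the DOP fixed-point equation (Γ = T·1{ξ > T} + (ξ + Γ')·1{ξ ≤ T}, γ = E[e^{-λT}] > 0, and assuming E[Γ²] < ∞), the second moment satisfies E[Γ²] = 2(1 − γ)/(λ²γ²) − 2E[T e^{-λT}]/(λγ²). -/
open MeasureTheory ProbabilityTheory Real

open Set Filter
open scoped ENNReal NNReal

lemma dop_expMeasure_integral (l : ℝ) (hl : 0 < l) (g : ℝ → ℝ) :
    ∫ x, g x ∂(expMeasure l) = ∫ x, exponentialPDFReal l x * g x := by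
  rw [expMeasure, gammaMeasure]
  have h : gammaPDF 1 l = fun x => ((fun x => (gammaPDFReal 1 l x).toNNReal) x : ℝ≥0∞) := by
    funext x; rfl
  rw [h, integral_withDensity_eq_integral_smul (by measurability) g]
  congr 1; funext x
  rw [NNReal.smul_def, smul_eq_mul, Real.coe_toNNReal _ (gammaPDFReal_nonneg zero_lt_one hl x)]
  rfl

lemma dop_pdf_eq (l x : ℝ) : exponentialPDFReal l x = if 0 ≤ x then l * exp (-(l*x)) else 0 := by
  rw [exponentialPDFReal, gammaPDFReal]
  split_ifs <;> simp [Real.Gamma_one]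

lemma dop_hasDerivAt_exp (l x : ℝ) :
    HasDerivAt (fun y => exp (-(l*y))) (-l * exp (-(l*x))) x := by
  have := ((hasDerivAt_id x).const_mul (-l)).exp
  simpa [neg_mul, mul_comm] using this

lemma dop_E0 (l : ℝ) (hl : 0 < l) {t : ℝ} (ht : 0 ≤ t) :
    ∫ x, (if t < x then 0 else 1 : ℝ) ∂(expMeasure l) = 1 - exp (-(l*t)) := by
  rw [dop_expMeasure_integral l hl]
  have h : (fun x => exponentialPDFReal l x * (if t < x then 0 else 1 : ℝ))
      = Set.indicator (Set.Icc 0 t) (fun x => l * exp (-(l*x))) := by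
    funext x
    rw [dop_pdf_eq]
    by_cases h0 : 0 ≤ x
    · by_cases h1 : t < x
      · rw [Set.indicator_of_notMem (by simp [Set.mem_Icc]; intro; linarith)]
        simp [h0, h1]
      · rw [Set.indicator_of_mem (by simp [Set.mem_Icc, h0]; linarith)]
        simp [h0, h1]
    · rw [Set.indicator_of_notMem (by simp [Set.mem_Icc]; intro; linarith)]
      simp [h0]
  rw [h, integral_indicator measurableSet_Icc, integral_Icc_eq_integral_Ioc,
    ← intervalIntegral.integral_of_le ht,
    intervalIntegral.integral_eq_sub_of_hasDerivAt
      (fun x _ => hasDerivAt_neg_exp_mul_exp)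
      ((by continuity : Continuous fun x => l * exp (-(l*x))).intervalIntegrable 0 t)]
  simp
  ring

lemma dop_E1 (l : ℝ) (hl : 0 < l) {t : ℝ} (ht : 0 ≤ t) :
    ∫ x, (if t < x then 0 else x) ∂(expMeasure l) = 1/l - exp (-(l*t)) * (t + 1/l) := by
  rw [dop_expMeasure_integral l hl]
  have h : (fun x => exponentialPDFReal l x * (if t < x then 0 else x))
      = Set.indicator (Set.Icc 0 t) (fun x => l * exp (-(l*x)) * x) := by
    funext x
    rw [dop_pdf_eq]
    by_cases h0 : 0 ≤ x
    · by_cases h1 : t < x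
      · rw [Set.indicator_of_notMem (by simp [Set.mem_Icc]; intro; linarith)]
        simp [h0, h1]
      · rw [Set.indicator_of_mem (by simp [Set.mem_Icc, h0]; linarith)]
        simp [h0, h1]
    · rw [Set.indicator_of_notMem (by simp [Set.mem_Icc]; intro; linarith)]
      simp [h0]
  have hderiv : ∀ x ∈ Set.uIcc 0 t,
      HasDerivAt (fun y => -exp (-(l*y)) * (y + 1/l)) (l * exp (-(l*x)) * x) x := by
    intro x _
    have := ((dop_hasDerivAt_exp l x).fun_neg).fun_mul ((hasDerivAt_id' x).add_const (1/l))
    refine this.congr_deriv ?_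
    field_simp
    ring
  rw [h, integral_indicator measurableSet_Icc, integral_Icc_eq_integral_Ioc,
    ← intervalIntegral.integral_of_le ht,
    intervalIntegral.integral_eq_sub_of_hasDerivAt hderiv
      ((by continuity : Continuous fun x => l * exp (-(l*x)) * x).intervalIntegrable 0 t)]
  simp
  ring

lemma dop_E2 (l : ℝ) (hl : 0 < l) {t : ℝ} (ht : 0 ≤ t) :
    ∫ x, (if t < x then 0 else x^2) ∂(expMeasure l)
      = 2/l^2 - exp (-(l*t)) * (t^2 + 2*t/l + 2/l^2) := by
  rw [dop_expMeasure_integral l hl]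
  have h : (fun x => exponentialPDFReal l x * (if t < x then 0 else x^2))
      = Set.indicator (Set.Icc 0 t) (fun x => l * exp (-(l*x)) * x^2) := by
    funext x
    rw [dop_pdf_eq]
    by_cases h0 : 0 ≤ x
    · by_cases h1 : t < x
      · rw [Set.indicator_of_notMem (by simp [Set.mem_Icc]; intro; linarith)]
        simp [h0, h1]
      · rw [Set.indicator_of_mem (by simp [Set.mem_Icc, h0]; linarith)]
        simp [h0, h1]
    · rw [Set.indicator_of_notMem (by simp [Set.mem_Icc]; intro; linarith)]
      simp [h0]
  have hderiv : ∀ x ∈ Set.uIcc 0 t,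
      HasDerivAt (fun y => -exp (-(l*y)) * (y^2 + 2*y/l + 2/l^2)) (l * exp (-(l*x)) * x^2) x := by
    intro x _
    have hpoly : HasDerivAt (fun y : ℝ => y^2 + 2*y/l + 2/l^2) (2*x + 2/l) x := by
      have h1 : HasDerivAt (fun y : ℝ => y^2) (2*x) x := by
        simpa using (hasDerivAt_pow 2 x)
      have h2 : HasDerivAt (fun y : ℝ => 2*y/l) (2/l) x := by
        simpa [mul_div_assoc, mul_comm] using ((hasDerivAt_id x).const_mul (2/l))
      simpa using (h1.add h2).add_const (2/l^2)
    have := ((dop_hasDerivAt_exp l x).fun_neg).fun_mul hpoly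
    refine this.congr_deriv ?_
    field_simp
    ring
  rw [h, integral_indicator measurableSet_Icc, integral_Icc_eq_integral_Ioc,
    ← intervalIntegral.integral_of_le ht,
    intervalIntegral.integral_eq_sub_of_hasDerivAt hderiv
      ((by continuity : Continuous fun x => l * exp (-(l*x)) * x^2).intervalIntegrable 0 t)]
  simp
  ring


lemma dop_fubini {Ω : Type} [MeasureSpace Ω] [IsProbabilityMeasure (ℙ : Measure Ω)]
    {l : ℝ} (hl : 0 < l) (T ξ : Ω → ℝ)
    (hTm : Measurable T) (hξm : Measurable ξ)
    (hξexp : Measure.map ξ ℙ = expMeasure l)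
    (hTξ : IndepFun T ξ ℙ)
    (F : ℝ → ℝ → ℝ) (hF : Measurable (Function.uncurry F))
    (hFi : Integrable (fun ω => F (T ω) (ξ ω)) ℙ) :
    ∫ ω, F (T ω) (ξ ω) ∂ℙ = ∫ ω, (∫ x, F (T ω) x ∂(expMeasure l)) ∂ℙ := by
  haveI : IsProbabilityMeasure (expMeasure l) := isProbabilityMeasure_expMeasure hl
  have hpair : AEMeasurable (fun ω => (T ω, ξ ω)) ℙ := (hTm.prodMk hξm).aemeasurable
  have hmap : (Measure.map (fun ω => (T ω, ξ ω)) ℙ) = ((Measure.map T ℙ)).prod (expMeasure l) := by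
    rw [← hξexp]
    exact (indepFun_iff_map_prod_eq_prod_map_map hTm.aemeasurable hξm.aemeasurable).1 hTξ
  have hFmm : AEStronglyMeasurable (Function.uncurry F) ((Measure.map (fun ω => (T ω, ξ ω)) ℙ)) :=
    hF.aestronglyMeasurable
  have hFi' : Integrable (Function.uncurry F) (((Measure.map T ℙ)).prod (expMeasure l)) := by
    rw [← hmap]
    exact (integrable_map_measure hFmm hpair).2 hFi
  calc ∫ ω, F (T ω) (ξ ω) ∂ℙ
      = ∫ p, Function.uncurry F p ∂((Measure.map (fun ω => (T ω, ξ ω)) ℙ)) :=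
        (integral_map hpair hFmm).symm
    _ = ∫ t, ∫ x, F t x ∂(expMeasure l) ∂(Measure.map T ℙ) := by
        rw [hmap]; exact integral_prod _ hFi'
    _ = ∫ ω, ∫ x, F (T ω) x ∂(expMeasure l) ∂ℙ := by
        refine integral_map hTm.aemeasurable ?_
        exact (hF.stronglyMeasurable.integral_prod_right').aestronglyMeasurable

lemma dop_exp_nonneg_ae {Ω : Type} [MeasureSpace Ω] [IsProbabilityMeasure (ℙ : Measure Ω)]
    {l : ℝ} (hl : 0 < l) (ξ : Ω → ℝ) (hξm : Measurable ξ)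
    (hξexp : Measure.map ξ ℙ = expMeasure l) : ∀ᵐ ω ∂(ℙ : Measure Ω), 0 ≤ ξ ω := by
  have h0 : (expMeasure l) (Set.Iio 0) = 0 := by
    rw [expMeasure, gammaMeasure, withDensity_apply _ measurableSet_Iio]
    simpa using lintegral_gammaPDF_of_nonpos (le_refl (0:ℝ)) (a := 1) (r := l)
  have : ℙ {ω | ξ ω < 0} = 0 := by
    have := Measure.map_apply (μ := (ℙ : Measure Ω)) hξm (measurableSet_Iio (a := (0:ℝ)))
    rw [hξexp, h0] at this
    simpa [Set.preimage, Set.Iio] using this.symm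
  filter_upwards [measure_eq_zero_iff_ae_notMem.1 this] with ω hω
  simpa using not_lt.1 hω

lemma dop_bdd1 {l t : ℝ} (hl : 0 < l) (ht : 0 ≤ t) : t * exp (-(l*t)) ≤ 1/l := by
  rw [exp_neg, ← div_eq_mul_inv, div_le_div_iff₀ (exp_pos _) hl]
  nlinarith [add_one_le_exp (l*t), mul_nonneg hl.le ht]

lemma dop_bdd2 {l t : ℝ} (hl : 0 < l) (ht : 0 ≤ t) : t^2 * exp (-(l*t)) ≤ 4/l^2 := by
  rw [exp_neg, ← div_eq_mul_inv, div_le_div_iff₀ (exp_pos _) (by positivity : (0:ℝ) < l^2)]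
  have h := add_one_le_exp (l*t/2)
  have hsq : exp (l*t) = exp (l*t/2) ^ 2 := by
    rw [← exp_nat_mul]; norm_num; ring
  nlinarith [mul_nonneg hl.le ht, exp_pos (l*t/2)]

-- per-t combined lemmas
lemma dop_nu_ae (l : ℝ) : ∀ᵐ x ∂(expMeasure l), 0 ≤ x := by
  have h0 : (expMeasure l) (Set.Iio 0) = 0 := by
    rw [expMeasure, gammaMeasure, withDensity_apply _ measurableSet_Iio]
    simpa using lintegral_gammaPDF_of_nonpos (le_refl (0:ℝ)) (a := 1) (r := l)
  filter_upwards [measure_eq_zero_iff_ae_notMem.1 h0] with x hx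
  simpa using not_lt.1 (by simpa using hx)

lemma dop_Hm (t : ℝ) : Measurable fun x : ℝ => (if t < x then (0:ℝ) else 1) :=
  Measurable.ite (measurableSet_lt measurable_const measurable_id) measurable_const
    measurable_const

lemma dop_Hint (l : ℝ) (hl : 0 < l) (t : ℝ) :
    Integrable (fun x : ℝ => (if t < x then (0:ℝ) else 1)) (expMeasure l) := by
  haveI : IsProbabilityMeasure (expMeasure l) := isProbabilityMeasure_expMeasure hl
  refine Integrable.mono' (integrable_const 1) (dop_Hm t).aestronglyMeasurable ?_
  filter_upwards with x
  split_ifs <;> simp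

lemma dop_F1 (l : ℝ) (hl : 0 < l) {t : ℝ} (ht : 0 ≤ t) :
    ∫ x, (if t < x then t else x) ∂(expMeasure l) = (1 - exp (-(l*t)))/l := by
  haveI : IsProbabilityMeasure (expMeasure l) := isProbabilityMeasure_expMeasure hl
  have hdec : (fun x : ℝ => (if t < x then t else x))
      = fun x => t * (1 - (if t < x then (0:ℝ) else 1)) + (if t < x then (0:ℝ) else x) := by
    funext x; split_ifs <;> ring
  have hGm : Measurable fun x : ℝ => (if t < x then (0:ℝ) else x) :=
    Measurable.ite (measurableSet_lt measurable_const measurable_id) measurable_const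
      measurable_id
  have hGint : Integrable (fun x : ℝ => (if t < x then (0:ℝ) else x)) (expMeasure l) := by
    refine Integrable.mono' (integrable_const t) hGm.aestronglyMeasurable ?_
    filter_upwards [dop_nu_ae l] with x hx
    split_ifs with h
    · simpa using ht
    · rw [Real.norm_eq_abs, abs_of_nonneg hx]; exact not_lt.1 h
  have hH1 : Integrable (fun x => t * (1 - if t < x then (0:ℝ) else 1)) (expMeasure l) :=
    ((integrable_const 1).sub (dop_Hint l hl t)).const_mul t
  rw [hdec, integral_add hH1 hGint, integral_const_mul, integral_sub (integrable_const 1) (dop_Hint l hl t),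
    integral_const, dop_E0 l hl ht, dop_E1 l hl ht]
  simp only [probReal_univ, measure_univ, ENNReal.toReal_one, smul_eq_mul, one_mul]
  field_simp
  ring

lemma dop_F2 (l : ℝ) (hl : 0 < l) {t : ℝ} (ht : 0 ≤ t) :
    ∫ x, (if t < x then t^2 else x^2) ∂(expMeasure l)
      = 2/l^2 - 2*t*exp (-(l*t))/l - 2*exp (-(l*t))/l^2 := by
  haveI : IsProbabilityMeasure (expMeasure l) := isProbabilityMeasure_expMeasure hl
  have hdec : (fun x : ℝ => (if t < x then t^2 else x^2))
      = fun x => t^2 * (1 - (if t < x then (0:ℝ) else 1)) + (if t < x then (0:ℝ) else x^2) := by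
    funext x; split_ifs <;> ring
  have hGm : Measurable fun x : ℝ => (if t < x then (0:ℝ) else x^2) :=
    Measurable.ite (measurableSet_lt measurable_const measurable_id) measurable_const
      (measurable_id.pow_const 2)
  have hGint : Integrable (fun x : ℝ => (if t < x then (0:ℝ) else x^2)) (expMeasure l) := by
    refine Integrable.mono' (integrable_const (t^2)) hGm.aestronglyMeasurable ?_
    filter_upwards [dop_nu_ae l] with x hx
    split_ifs with h
    · simpa using sq_nonneg t
    · rw [Real.norm_eq_abs, abs_of_nonneg (sq_nonneg x)]
      exact pow_le_pow_left₀ hx (not_lt.1 h) 2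
  have hH1 : Integrable (fun x => t^2 * (1 - if t < x then (0:ℝ) else 1)) (expMeasure l) :=
    ((integrable_const 1).sub (dop_Hint l hl t)).const_mul (t^2)
  rw [hdec, integral_add hH1 hGint, integral_const_mul, integral_sub (integrable_const 1) (dop_Hint l hl t),
    integral_const, dop_E0 l hl ht, dop_E2 l hl ht]
  simp only [probReal_univ, measure_univ, ENNReal.toReal_one, smul_eq_mul, one_mul]
  field_simp
  ring

/-- second moment of the DOP completion time `Γ`:
`E[Γ²] = 2(1−γ)/(λ²γ²) − 2E[T e^{-λT}]/(λγ²)`. -/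
theorem dop_gamma_second_moment
    {Ω : Type} [MeasureSpace Ω] [IsProbabilityMeasure (ℙ : Measure Ω)]
    {l : ℝ} (hl : 0 < l)
    (T ξ Γ Γ' : Ω → ℝ) (hT0 : ∀ ω, 0 ≤ T ω)
    (hTm : Measurable T) (hξm : Measurable ξ) (hΓm : Measurable Γ) (hΓ'm : Measurable Γ')
    (hξexp : Measure.map ξ ℙ = expMeasure l)
    (hcopy : Measure.map Γ' ℙ = Measure.map Γ ℙ)
    (hindep : iIndepFun ![T, ξ, Γ'] ℙ)
    (hTint : Integrable T ℙ) (hΓ2int : Integrable (fun ω => (Γ ω) ^ 2) ℙ)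
    (hfix : ∀ ω, Γ ω = (if T ω < ξ ω then T ω else ξ ω + Γ' ω))
    (hγpos : 0 < ∫ ω, Real.exp (-(l * T ω)) ∂ℙ) :
    (∫ ω, (Γ ω) ^ 2 ∂ℙ)
      = 2 * (1 - ∫ ω, Real.exp (-(l * T ω)) ∂ℙ)
          / (l ^ 2 * (∫ ω, Real.exp (-(l * T ω)) ∂ℙ) ^ 2)
        - 2 * (∫ ω, T ω * Real.exp (-(l * T ω)) ∂ℙ)
          / (l * (∫ ω, Real.exp (-(l * T ω)) ∂ℙ) ^ 2) := by
  haveI : IsProbabilityMeasure (expMeasure l) := isProbabilityMeasure_expMeasure hl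
  have hξae : ∀ᵐ ω ∂(ℙ : Measure Ω), 0 ≤ ξ ω := by
    have h0 : (expMeasure l) (Set.Iio 0) = 0 := by
      rw [expMeasure, gammaMeasure, withDensity_apply _ measurableSet_Iio]
      simpa using lintegral_gammaPDF_of_nonpos (le_refl (0:ℝ)) (a := 1) (r := l)
    have hz : ℙ {ω | ξ ω < 0} = 0 := by
      have := Measure.map_apply (μ := (ℙ : Measure Ω)) hξm (measurableSet_Iio (a := (0:ℝ)))
      rw [hξexp, h0] at this
      simpa [Set.preimage, Set.Iio] using this.symm
    filter_upwards [measure_eq_zero_iff_ae_notMem.1 hz] with ω hω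
    simpa using not_lt.1 hω
  -- measurability on Ω
  have hAm : Measurable fun ω => (if T ω < ξ ω then (0:ℝ) else 1) :=
    Measurable.ite (measurableSet_lt hTm hξm) measurable_const measurable_const
  have hBm : Measurable fun ω => (if T ω < ξ ω then (0:ℝ) else ξ ω) :=
    Measurable.ite (measurableSet_lt hTm hξm) measurable_const hξm
  have hF1m : Measurable fun ω => (if T ω < ξ ω then T ω else ξ ω) :=
    Measurable.ite (measurableSet_lt hTm hξm) hTm hξm
  have hF2m : Measurable fun ω => (if T ω < ξ ω then (T ω)^2 else (ξ ω)^2) :=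
    Measurable.ite (measurableSet_lt hTm hξm) (hTm.pow_const 2) (hξm.pow_const 2)
  -- uncurried measurability
  have hsetm : MeasurableSet {p : ℝ × ℝ | p.1 < p.2} :=
    measurableSet_lt measurable_fst measurable_snd
  have hAum : Measurable fun p : ℝ × ℝ => (if p.1 < p.2 then (0:ℝ) else 1) :=
    Measurable.ite hsetm measurable_const measurable_const
  have hBum : Measurable fun p : ℝ × ℝ => (if p.1 < p.2 then (0:ℝ) else p.2) :=
    Measurable.ite hsetm measurable_const measurable_snd
  have hF1um : Measurable fun p : ℝ × ℝ => (if p.1 < p.2 then p.1 else p.2) :=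
    Measurable.ite hsetm measurable_fst measurable_snd
  have hF2um : Measurable fun p : ℝ × ℝ => (if p.1 < p.2 then p.1^2 else p.2^2) :=
    Measurable.ite hsetm (measurable_fst.pow_const 2) (measurable_snd.pow_const 2)
  -- copy facts
  have hsqm : Measurable fun x : ℝ => x^2 := measurable_id.pow_const 2
  have hmapΓsq : Integrable (fun x : ℝ => x^2) (Measure.map Γ ℙ) := by
    rw [integrable_map_measure hsqm.aestronglyMeasurable hΓm.aemeasurable]
    exact hΓ2int
  have hΓ'2int : Integrable (fun ω => (Γ' ω)^2) ℙ := by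
    have h := (integrable_map_measure hsqm.aestronglyMeasurable hΓ'm.aemeasurable).1
      (by rw [hcopy]; exact hmapΓsq)
    exact h
  have hIntSq' : ∫ ω, (Γ' ω)^2 ∂ℙ = ∫ ω, (Γ ω)^2 ∂ℙ :=
    calc ∫ ω, (Γ' ω)^2 ∂ℙ = ∫ x, x^2 ∂(Measure.map Γ' ℙ) :=
          (integral_map hΓ'm.aemeasurable hsqm.aestronglyMeasurable).symm
      _ = ∫ x, x^2 ∂(Measure.map Γ ℙ) := by rw [hcopy]
      _ = ∫ ω, (Γ ω)^2 ∂ℙ := integral_map hΓm.aemeasurable hsqm.aestronglyMeasurable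
  have hΓint : Integrable Γ ℙ := by
    refine Integrable.mono' (hΓ2int.add (integrable_const 1)) hΓm.aestronglyMeasurable ?_
    filter_upwards with ω
    simp only [Pi.add_apply]
    rw [Real.norm_eq_abs]
    nlinarith [sq_nonneg (|Γ ω| - 1), abs_nonneg (Γ ω), sq_abs (Γ ω)]
  have hΓ'int : Integrable Γ' ℙ := by
    refine Integrable.mono' (hΓ'2int.add (integrable_const 1)) hΓ'm.aestronglyMeasurable ?_
    filter_upwards with ω
    simp only [Pi.add_apply]
    rw [Real.norm_eq_abs]
    nlinarith [sq_nonneg (|Γ' ω| - 1), abs_nonneg (Γ' ω), sq_abs (Γ' ω)]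
  have hIntΓ' : ∫ ω, Γ' ω ∂ℙ = ∫ ω, Γ ω ∂ℙ :=
    calc ∫ ω, Γ' ω ∂ℙ = ∫ x, x ∂(Measure.map Γ' ℙ) :=
          (integral_map hΓ'm.aemeasurable aestronglyMeasurable_id).symm
      _ = ∫ x, x ∂(Measure.map Γ ℙ) := by rw [hcopy]
      _ = ∫ ω, Γ ω ∂ℙ := integral_map hΓm.aemeasurable aestronglyMeasurable_id
  -- independence
  have hfmeas : ∀ i, Measurable (![T, ξ, Γ'] i) := by
    intro i; fin_cases i <;> simpa
  have hTξ : IndepFun T ξ ℙ := by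
    have h := hindep.indepFun (show (0:Fin 3) ≠ 1 by decide)
    simpa using h
  have hPairIndep : IndepFun (fun ω => (T ω, ξ ω)) Γ' ℙ := by
    have h := hindep.indepFun_prodMk hfmeas 0 1 2 (by decide) (by decide)
    simpa using h
  -- integrability on Ω
  have hexpint : Integrable (fun ω => Real.exp (-(l * T ω))) ℙ := by
    refine Integrable.mono' (integrable_const 1) (((hTm.const_mul l).neg).exp).aestronglyMeasurable ?_
    filter_upwards with ω
    rw [Real.norm_eq_abs, abs_of_nonneg (exp_nonneg _)]
    exact exp_le_one_iff.2 (by simpa using mul_nonneg hl.le (hT0 ω))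
  have hmint : Integrable (fun ω => T ω * Real.exp (-(l * T ω))) ℙ := by
    refine Integrable.mono' (integrable_const (1/l))
      (hTm.mul ((hTm.const_mul l).neg).exp).aestronglyMeasurable ?_
    filter_upwards with ω
    rw [Real.norm_eq_abs, abs_of_nonneg (mul_nonneg (hT0 ω) (exp_nonneg _))]
    exact dop_bdd1 hl (hT0 ω)
  have hAint : Integrable (fun ω => (if T ω < ξ ω then (0:ℝ) else 1)) ℙ := by
    refine Integrable.mono' (integrable_const 1) hAm.aestronglyMeasurable ?_
    filter_upwards with ω
    split_ifs <;> simp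
  have hBint : Integrable (fun ω => (if T ω < ξ ω then (0:ℝ) else ξ ω)) ℙ := by
    refine Integrable.mono' hTint hBm.aestronglyMeasurable ?_
    filter_upwards [hξae] with ω hω
    split_ifs with h
    · simpa using hT0 ω
    · rw [Real.norm_eq_abs, abs_of_nonneg hω]; exact not_lt.1 h
  have hF1int : Integrable (fun ω => (if T ω < ξ ω then T ω else ξ ω)) ℙ := by
    refine Integrable.mono' hTint hF1m.aestronglyMeasurable ?_
    filter_upwards [hξae] with ω hω
    split_ifs with h
    · rw [Real.norm_eq_abs, abs_of_nonneg (hT0 ω)]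
    · rw [Real.norm_eq_abs, abs_of_nonneg hω]; exact not_lt.1 h
  have hF2int : Integrable (fun ω => (if T ω < ξ ω then (T ω)^2 else (ξ ω)^2)) ℙ := by
    refine Integrable.mono' ((hΓ2int.add hΓ'2int).const_mul 2) hF2m.aestronglyMeasurable ?_
    filter_upwards with ω
    simp only [Pi.add_apply]
    rw [Real.norm_eq_abs]
    split_ifs with h
    · have hΓeq : Γ ω = T ω := by rw [hfix ω, if_pos h]
      rw [abs_of_nonneg (sq_nonneg _), ← hΓeq]
      nlinarith [sq_nonneg (Γ' ω), sq_nonneg (Γ ω)]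
    · have hΓeq : Γ ω = ξ ω + Γ' ω := by rw [hfix ω, if_neg h]
      have : ξ ω = Γ ω - Γ' ω := by rw [hΓeq]; ring
      rw [abs_of_nonneg (sq_nonneg _), this]
      nlinarith [sq_nonneg (Γ ω + Γ' ω)]
  -- product integrability
  have hBmulint : Integrable (fun ω => (if T ω < ξ ω then (0:ℝ) else ξ ω) * Γ' ω) ℙ := by
    have h := (hPairIndep.comp hBum measurable_id).integrable_mul hBint hΓ'int
    exact h
  have hAΓ'int : Integrable (fun ω => (if T ω < ξ ω then (0:ℝ) else 1) * Γ' ω) ℙ :=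
    Integrable.bdd_mul (c := 1) hΓ'int hAm.aestronglyMeasurable
      (Filter.Eventually.of_forall fun ω => by split_ifs <;> simp)
  have hAΓ'2int : Integrable (fun ω => (if T ω < ξ ω then (0:ℝ) else 1) * (Γ' ω)^2) ℙ :=
    Integrable.bdd_mul (c := 1) hΓ'2int hAm.aestronglyMeasurable
      (Filter.Eventually.of_forall fun ω => by split_ifs <;> simp)
  -- independence product identities
  have hprodA1 : ∫ ω, (if T ω < ξ ω then (0:ℝ) else 1) * Γ' ω ∂ℙ
      = (∫ ω, (if T ω < ξ ω then (0:ℝ) else 1) ∂ℙ) * ∫ ω, Γ' ω ∂ℙ :=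
    (hPairIndep.comp hAum measurable_id).integral_fun_mul_eq_mul_integral hAm.aestronglyMeasurable
      hΓ'm.aestronglyMeasurable
  have hprodB1 : ∫ ω, (if T ω < ξ ω then (0:ℝ) else ξ ω) * Γ' ω ∂ℙ
      = (∫ ω, (if T ω < ξ ω then (0:ℝ) else ξ ω) ∂ℙ) * ∫ ω, Γ' ω ∂ℙ :=
    (hPairIndep.comp hBum measurable_id).integral_fun_mul_eq_mul_integral hBm.aestronglyMeasurable
      hΓ'm.aestronglyMeasurable
  have hprodA2 : ∫ ω, (if T ω < ξ ω then (0:ℝ) else 1) * (Γ' ω)^2 ∂ℙ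
      = (∫ ω, (if T ω < ξ ω then (0:ℝ) else 1) ∂ℙ) * ∫ ω, (Γ' ω)^2 ∂ℙ :=
    (hPairIndep.comp hAum hsqm).integral_fun_mul_eq_mul_integral hAm.aestronglyMeasurable
      (hΓ'm.pow_const 2).aestronglyMeasurable
  -- Fubini evaluations
  have hA : ∫ ω, (if T ω < ξ ω then (0:ℝ) else 1) ∂ℙ
      = 1 - ∫ ω, Real.exp (-(l * T ω)) ∂ℙ := by
    rw [dop_fubini hl T ξ hTm hξm hξexp hTξ (fun t x => if t < x then (0:ℝ) else 1) hAum hAint]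
    rw [integral_congr_ae (Filter.Eventually.of_forall fun ω => dop_E0 l hl (hT0 ω))]
    rw [integral_sub (integrable_const 1) hexpint, integral_const]
    simp
  have hB : ∫ ω, (if T ω < ξ ω then (0:ℝ) else ξ ω) ∂ℙ
      = 1/l - (∫ ω, T ω * Real.exp (-(l * T ω)) ∂ℙ)
        - (∫ ω, Real.exp (-(l * T ω)) ∂ℙ)/l := by
    rw [dop_fubini hl T ξ hTm hξm hξexp hTξ (fun t x => if t < x then (0:ℝ) else x) hBum hBint]
    have hptw : ∀ ω, (∫ x, (if T ω < x then (0:ℝ) else x) ∂expMeasure l)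
        = 1/l - (T ω * Real.exp (-(l * T ω)) + Real.exp (-(l * T ω)) * (1/l)) := by
      intro ω
      rw [dop_E1 l hl (hT0 ω)]
      ring
    have hexp1l : Integrable (fun ω => Real.exp (-(l * T ω)) * (1/l)) ℙ := hexpint.mul_const _
    have hsum : Integrable
        (fun ω => T ω * Real.exp (-(l * T ω)) + Real.exp (-(l * T ω)) * (1/l)) ℙ :=
      hmint.add hexp1l
    rw [integral_congr_ae (Filter.Eventually.of_forall hptw),
      integral_sub (integrable_const _) hsum,
      integral_add hmint hexp1l, integral_const, integral_mul_const]
    simp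
    ring
  have hF1 : ∫ ω, (if T ω < ξ ω then T ω else ξ ω) ∂ℙ
      = (1 - ∫ ω, Real.exp (-(l * T ω)) ∂ℙ)/l := by
    rw [dop_fubini hl T ξ hTm hξm hξexp hTξ (fun t x => if t < x then t else x) hF1um hF1int]
    have hptw : ∀ ω, (∫ x, (if T ω < x then T ω else x) ∂expMeasure l)
        = (1 - Real.exp (-(l * T ω)))/l := fun ω => dop_F1 l hl (hT0 ω)
    rw [integral_congr_ae (Filter.Eventually.of_forall hptw), integral_div,
      integral_sub (integrable_const 1) hexpint, integral_const]
    simp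
  have hF2 : ∫ ω, (if T ω < ξ ω then (T ω)^2 else (ξ ω)^2) ∂ℙ
      = 2/l^2 - 2*(∫ ω, T ω * Real.exp (-(l * T ω)) ∂ℙ)/l
        - 2*(∫ ω, Real.exp (-(l * T ω)) ∂ℙ)/l^2 := by
    rw [dop_fubini hl T ξ hTm hξm hξexp hTξ (fun t x => if t < x then t^2 else x^2) hF2um hF2int]
    have hptw : ∀ ω, (∫ x, (if T ω < x then (T ω)^2 else x^2) ∂expMeasure l)
        = 2/l^2 - ((2/l) * (T ω * Real.exp (-(l * T ω))) + (2/l^2) * Real.exp (-(l * T ω))) := by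
      intro ω
      rw [dop_F2 l hl (hT0 ω)]
      ring
    have hi1 : Integrable (fun ω => (2/l) * (T ω * Real.exp (-(l * T ω)))) ℙ :=
      hmint.const_mul _
    have hi2 : Integrable (fun ω => (2/l^2) * Real.exp (-(l * T ω))) ℙ :=
      hexpint.const_mul _
    have hsum : Integrable (fun ω => (2/l) * (T ω * Real.exp (-(l * T ω)))
        + (2/l^2) * Real.exp (-(l * T ω))) ℙ := hi1.add hi2
    rw [integral_congr_ae (Filter.Eventually.of_forall hptw),
      integral_sub (integrable_const _) hsum,
      integral_add hi1 hi2, integral_const, integral_const_mul, integral_const_mul]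
    simp
    ring
  -- first moment equation
  have hsplit1 : (fun ω => Γ ω) = fun ω => (if T ω < ξ ω then T ω else ξ ω)
      + (if T ω < ξ ω then (0:ℝ) else 1) * Γ' ω := by
    funext ω
    rw [hfix ω]
    by_cases h : T ω < ξ ω <;> simp [h]
  have eqM1 : ∫ ω, Γ ω ∂ℙ = (1 - ∫ ω, Real.exp (-(l * T ω)) ∂ℙ)/l
      + (1 - ∫ ω, Real.exp (-(l * T ω)) ∂ℙ) * ∫ ω, Γ ω ∂ℙ := by
    calc ∫ ω, Γ ω ∂ℙ
        = ∫ ω, ((if T ω < ξ ω then T ω else ξ ω)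
            + (if T ω < ξ ω then (0:ℝ) else 1) * Γ' ω) ∂ℙ := by rw [← hsplit1]
      _ = (∫ ω, (if T ω < ξ ω then T ω else ξ ω) ∂ℙ)
            + ∫ ω, (if T ω < ξ ω then (0:ℝ) else 1) * Γ' ω ∂ℙ :=
          integral_add hF1int hAΓ'int
      _ = (1 - ∫ ω, Real.exp (-(l * T ω)) ∂ℙ)/l
            + (1 - ∫ ω, Real.exp (-(l * T ω)) ∂ℙ) * ∫ ω, Γ ω ∂ℙ := by
          rw [hprodA1, hIntΓ', hA, hF1]
  -- second moment equation
  have hsplit2 : (fun ω => (Γ ω)^2) = fun ω => (if T ω < ξ ω then (T ω)^2 else (ξ ω)^2)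
      + 2 * ((if T ω < ξ ω then (0:ℝ) else ξ ω) * Γ' ω)
      + (if T ω < ξ ω then (0:ℝ) else 1) * (Γ' ω)^2 := by
    funext ω
    rw [hfix ω]
    by_cases h : T ω < ξ ω
    · simp [h]
    · simp only [if_neg h]
      ring
  have eqM2 : ∫ ω, (Γ ω)^2 ∂ℙ
      = (2/l^2 - 2*(∫ ω, T ω * Real.exp (-(l * T ω)) ∂ℙ)/l
          - 2*(∫ ω, Real.exp (-(l * T ω)) ∂ℙ)/l^2)
        + 2 * ((1/l - (∫ ω, T ω * Real.exp (-(l * T ω)) ∂ℙ)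
            - (∫ ω, Real.exp (-(l * T ω)) ∂ℙ)/l) * ∫ ω, Γ ω ∂ℙ)
        + (1 - ∫ ω, Real.exp (-(l * T ω)) ∂ℙ) * ∫ ω, (Γ ω)^2 ∂ℙ := by
    calc ∫ ω, (Γ ω)^2 ∂ℙ
        = ∫ ω, ((if T ω < ξ ω then (T ω)^2 else (ξ ω)^2)
            + 2 * ((if T ω < ξ ω then (0:ℝ) else ξ ω) * Γ' ω)
            + (if T ω < ξ ω then (0:ℝ) else 1) * (Γ' ω)^2) ∂ℙ := by rw [← hsplit2]
      _ = (∫ ω, (if T ω < ξ ω then (T ω)^2 else (ξ ω)^2) ∂ℙ)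
            + (∫ ω, 2 * ((if T ω < ξ ω then (0:ℝ) else ξ ω) * Γ' ω) ∂ℙ)
            + ∫ ω, (if T ω < ξ ω then (0:ℝ) else 1) * (Γ' ω)^2 ∂ℙ := by
          have hsum12 : Integrable (fun ω => (if T ω < ξ ω then (T ω)^2 else (ξ ω)^2)
              + 2 * ((if T ω < ξ ω then (0:ℝ) else ξ ω) * Γ' ω)) ℙ :=
            hF2int.add (hBmulint.const_mul 2)
          have hBmul2int : Integrable
              (fun ω => 2 * ((if T ω < ξ ω then (0:ℝ) else ξ ω) * Γ' ω)) ℙ :=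
            hBmulint.const_mul 2
          rw [integral_add hsum12 hAΓ'2int]
          congr 1
          exact integral_add hF2int hBmul2int
      _ = _ := by
          rw [integral_const_mul, hprodB1, hprodA2, hIntΓ', hIntSq', hA, hB, hF2]
  -- final algebra
  set γ := ∫ ω, Real.exp (-(l * T ω)) ∂ℙ with hγdef
  set m := ∫ ω, T ω * Real.exp (-(l * T ω)) ∂ℙ with hmdef
  set M1 := ∫ ω, Γ ω ∂ℙ with hM1def
  set M2 := ∫ ω, (Γ ω)^2 ∂ℙ with hM2def
  have hlne : l ≠ 0 := hl.ne'
  have hγne : γ ≠ 0 := hγpos.ne'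
  have h1 : M1 = (1-γ)/l + (1-γ)*M1 := eqM1
  have h2 : M2 = (2/l^2 - 2*m/l - 2*γ/l^2) + 2*(1/l - m - γ/l)*M1 + (1-γ)*M2 := by
    linear_combination eqM2
  field_simp at h1 h2
  have h1' : l*γ*M1 = 1-γ := by linear_combination h1
  have h2'' : l^6*γ*M2 = 2*l^4 - 2*m*l^5 - 2*γ*l^4 + 2*(1-m*l-γ)*M1*l^5 := by
    linear_combination l^4 * h2
  have key_scaled : l^6*γ^2*M2 = 2*l^4*(1-γ) - 2*m*l^5 := by
    linear_combination γ*h2'' + 2*l^4*(1-m*l-γ)*h1'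
  have key : l^2*γ^2*M2 = 2*(1-γ) - 2*m*l := by
    apply mul_left_cancel₀ (pow_ne_zero 4 hlne)
    linear_combination key_scaled
  have hM2 : M2 = (2*(1-γ) - 2*m*l)/(l^2*γ^2) := by
    rw [← key]; field_simp
  rw [hM2]; field_simp
end

section
/- With ρ = λE[T], γ = E[e^{-λT}], d_n = 1/λ + E[T], and d_o = 1/(λγ), the DNP scheme has strictly smaller AAoI than DOP (a_DNP < a_DOP) if and only if d_o − d_n > (E[T²]/(2E[T]))·(ρ/(1+ρ)), equivalently if and only if (E[T²]/(2E[T]²)·ρ²/(1+ρ) + 1 + ρ)·γ < 1. -/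
open MeasureTheory ProbabilityTheory Real

/-- `a_DNP < a_DOP` iff `d_o − d_n > (E[T²]/(2E[T]))·(ρ/(1+ρ))`
iff `(E[T²]/(2E[T]²)·ρ²/(1+ρ) + 1 + ρ)·γ < 1`. -/
theorem dnp_better_than_dop_iff
    {Ω : Type} [MeasureSpace Ω] [IsProbabilityMeasure (ℙ : Measure Ω)]
    {l : ℝ} (hl : 0 < l)
    (T : Ω → ℝ) (hT0 : ∀ ω, 0 ≤ T ω) (hTm : Measurable T)
    (hT2 : Integrable (fun ω => (T ω) ^ 2) ℙ)
    (ET ET2 γ ρ dn do' aDNP aDOP : ℝ)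
    (hET : ET = ∫ ω, T ω ∂ℙ) (hET2 : ET2 = ∫ ω, (T ω) ^ 2 ∂ℙ)
    (hγ : γ = ∫ ω, Real.exp (-(l * T ω)) ∂ℙ) (hγpos : 0 < γ)
    (hETpos : 0 < ET) (hρ : ρ = l * ET)
    (hdn : dn = 1 / l + ET) (hdo : do' = 1 / (l * γ))
    (haDNP : aDNP = ET + 1 / l + ET2 / (2 * ET) * (ρ / (1 + ρ)))
    (haDOP : aDOP = 1 / (l * γ)) :
    (aDNP < aDOP ↔ do' - dn > ET2 / (2 * ET) * (ρ / (1 + ρ)))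
    ∧ (aDNP < aDOP ↔ (ET2 / (2 * ET ^ 2) * (ρ ^ 2 / (1 + ρ)) + 1 + ρ) * γ < 1) := by
  have hρpos : 0 < ρ := by rw [hρ]; positivity
  have h1ρ : 0 < 1 + ρ := by linarith
  have hlγ : 0 < l * γ := by positivity
  have hE : (ET2 / (2 * ET ^ 2) * (ρ ^ 2 / (1 + ρ)) + 1 + ρ) = l * aDNP := by
    subst hρ haDNP
    field_simp
    ring
  constructor
  · rw [hdo, hdn, haDNP, haDOP]
    constructor <;> intro h <;> linarith
  · rw [hE, haDOP]
    rw [show l * aDNP * γ = aDNP * (l * γ) by ring, ← lt_div_iff₀ hlγ, one_div]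
end

section
/- Consider threshold policies parameterized by π ∈ [0,1] (the stationary probability of selecting DNP) with AAoI lower bound f_o(π) = [ d_o((b_n − b_o)π + b_o) + 0.5(c_n − c_o)π + 0.5 c_o ] / [ (d_n − d_o)π + d_o ]. If d_n ≥ d_o then the numerator of f_o′(π), namely 0.5(c_n d_o − c_o d_n) + d_o(b_n d_o − b_o d_n), is strictly positive, hence f_o is strictly increasing on [0,1] and is minimized at π = 0. -/
open MeasureTheory ProbabilityTheory Real Set

/-- if `d_n ≥ d_o` then the numerator of `f_o′`,
`0.5(c_n d_o − c_o d_n) + d_o(b_n d_o − b_o d_n)`, is strictly positive, hence the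
lower bound `f_o` is strictly increasing on `[0,1]` and minimized at `π = 0`. -/
theorem fo_increasing_dop_optimal
    {Ω : Type} [MeasureSpace Ω] [IsProbabilityMeasure (ℙ : Measure Ω)]
    {l : ℝ} (hl : 0 < l)
    (T : Ω → ℝ) (hT0 : ∀ ω, 0 ≤ T ω) (hTm : Measurable T)
    (hT2 : Integrable (fun ω => (T ω) ^ 2) ℙ)
    (ET ET2 m γ bn bo dn do' cn co : ℝ)
    (hET : ET = ∫ ω, T ω ∂ℙ) (hETpos : 0 < ET)
    (hET2 : ET2 = ∫ ω, (T ω) ^ 2 ∂ℙ)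
    (hm : m = ∫ ω, T ω * Real.exp (-(l * T ω)) ∂ℙ)
    (hγ : γ = ∫ ω, Real.exp (-(l * T ω)) ∂ℙ) (hγpos : 0 < γ) (hγlt : γ < 1)
    (hbn : bn = ET) (hbo : bo = m / γ)
    (hdn : dn = 1 / l + ET) (hdo : do' = 1 / (l * γ))
    (hcn : cn = 2 / l ^ 2 + 2 * ET / l + ET2)
    (hco : co = 2 / (l ^ 2 * γ ^ 2) - 2 * m / (l * γ ^ 2))
    (fo : ℝ → ℝ)
    (hfo : ∀ x, fo x
        = (do' * ((bn - bo) * x + bo) + 0.5 * (cn - co) * x + 0.5 * co)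
          / ((dn - do') * x + do'))
    (hdndo : dn ≥ do') :
    0 < 0.5 * (cn * do' - co * dn) + do' * (bn * do' - bo * dn)
    ∧ StrictMonoOn fo (Icc (0 : ℝ) 1)
    ∧ ∀ x ∈ Icc (0 : ℝ) 1, fo 0 ≤ fo x := by

  -- T is integrable since T ≤ 1 + T²
  have hT1 : Integrable T ℙ := by
    have : Integrable (fun ω => 1 + (T ω) ^ 2) ℙ := (integrable_const 1).add hT2
    refine this.mono' hTm.aestronglyMeasurable (Filter.Eventually.of_forall fun ω => ?_)
    rw [Real.norm_eq_abs, abs_of_nonneg (hT0 ω)]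
    nlinarith [sq_nonneg (T ω - 1)]
  -- ET2 > 0 via variance
  have hET2pos : 0 < ET2 := by
    have hvar : 0 ≤ ∫ ω, (T ω - ET) ^ 2 ∂ℙ :=
      integral_nonneg fun ω => sq_nonneg _
    have hexp : ∫ ω, (T ω - ET) ^ 2 ∂ℙ = ET2 - ET ^ 2 := by
      have h1 : ∀ ω, (T ω - ET) ^ 2 = (T ω) ^ 2 - (2 * ET) * T ω + ET ^ 2 := by
        intro ω; ring
      simp_rw [h1]
      have hi2 : Integrable (fun ω => (2 * ET) * T ω) ℙ := hT1.const_mul _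
      have hi1 : Integrable (fun ω => T ω ^ 2 - (2 * ET) * T ω) ℙ := hT2.sub hi2
      rw [integral_add hi1 (integrable_const _), integral_sub hT2 hi2,
        integral_const_mul, integral_const]
      simp [← hET, ← hET2]
      ring
    nlinarith
  have hlγ : 0 < l * γ := mul_pos hl hγpos
  -- key algebraic identity
  have key : 0.5 * (cn * do' - co * dn) + do' * (bn * do' - bo * dn)
      = ET2 / (2 * (l * γ)) + (dn - do') / (l ^ 2 * γ) := by
    subst hbn hbo hdn hdo hcn hco
    field_simp
    ring
  have hNpos : 0 < 0.5 * (cn * do' - co * dn) + do' * (bn * do' - bo * dn) := by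
    rw [key]
    have h1 : 0 < ET2 / (2 * (l * γ)) := by positivity
    have h2 : 0 ≤ (dn - do') / (l ^ 2 * γ) := by
      apply div_nonneg (by linarith) (by positivity)
    linarith
  have hdo'pos : 0 < do' := by rw [hdo]; positivity
  have hden : ∀ x : ℝ, 0 ≤ x → 0 < (dn - do') * x + do' := fun x hx => by
    have : 0 ≤ (dn - do') * x := mul_nonneg (by linarith) hx
    linarith
  have hmono : StrictMonoOn fo (Icc (0 : ℝ) 1) := by
    intro x hx y hy hxy
    rw [hfo x, hfo y]
    rw [div_lt_div_iff₀ (hden x hx.1) (hden y hy.1)]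
    have expand :
        (do' * ((bn - bo) * y + bo) + 0.5 * (cn - co) * y + 0.5 * co) * ((dn - do') * x + do')
        - (do' * ((bn - bo) * x + bo) + 0.5 * (cn - co) * x + 0.5 * co) * ((dn - do') * y + do')
        = (0.5 * (cn * do' - co * dn) + do' * (bn * do' - bo * dn)) * (y - x) := by
      ring
    nlinarith [mul_pos hNpos (sub_pos.mpr hxy)]
  refine ⟨hNpos, hmono, fun x hx => ?_⟩
  rcases eq_or_lt_of_le hx.1 with h | h
  · rw [← h]
  · exact le_of_lt (hmono ⟨le_refl 0, zero_le_one⟩ hx h)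
end
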